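/- (Hyers–Ulam–Rassias stability) Let E₁, E₂ be real normed spaces with E₂ complete, ε ≥ 0, and 0 ≤ p < 1. If f : E₁ → E₂ satisfies ‖f(x+y) − f(x) − f(y)‖ ≤ ε(‖x‖^p + ‖y‖^p) for all x, y ∈ E₁, then there exists a unique additive map T : E₁ → E₂ with ‖f(x) − T(x)‖ ≤ (2ε/(2 − 2^p))‖x‖^p for all x ∈ E₁, and T(x) = lim_{n→∞} 2^{-n} f(2^n x). -/

import Mathlib

open Filter Topology

/-- Hyers–Ulam–Rassias stability for `0 ≤ p < 1`. -/
theorem rassias_stability {E₁ E₂ : Type*}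
    [NormedAddCommGroup E₁] [NormedSpace ℝ E₁]
    [NormedAddCommGroup E₂] [NormedSpace ℝ E₂] [CompleteSpace E₂]
    (ε : ℝ) (hε : 0 ≤ ε) (p : ℝ) (hp0 : 0 ≤ p) (hp1 : p < 1)
    (f : E₁ → E₂)
    (hf : ∀ x y : E₁, ‖f (x + y) - f x - f y‖ ≤ ε * (‖x‖ ^ p + ‖y‖ ^ p)) :
    ∃! T : E₁ → E₂,
      (∀ x y, T (x + y) = T x + T y) ∧
      (∀ x : E₁, ‖f x - T x‖ ≤ (2 * ε / (2 - 2 ^ p)) * ‖x‖ ^ p) ∧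
      (∀ x : E₁, Tendsto (fun n : ℕ => ((2:ℝ)^n)⁻¹ • f ((2:ℝ)^n • x)) atTop (nhds (T x))) := by
  set r : ℝ := (2:ℝ) ^ (p - 1) with hr_def
  have hr0 : 0 ≤ r := Real.rpow_nonneg (by norm_num) _
  have hr1 : r < 1 := Real.rpow_lt_one_of_one_lt_of_neg (by norm_num) (by linarith)
  set g : E₁ → ℕ → E₂ := fun x n => ((2:ℝ)^n)⁻¹ • f ((2:ℝ)^n • x) with hg_def
  -- pow identity
  have hpow : ∀ n : ℕ, ((2:ℝ)^n) ^ p = r ^ n * 2 ^ n := by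
    intro n
    rw [← Real.rpow_natCast (2:ℝ) n, ← Real.rpow_mul (by norm_num), hr_def,
      ← Real.rpow_natCast ((2:ℝ)^(p-1)) n, ← Real.rpow_mul (by norm_num),
      ← Real.rpow_add (by norm_num)]
    congr 1
    push_cast
    ring
  have h2n : ∀ n : ℕ, (0:ℝ) < 2 ^ n := fun n => by positivity
  -- key step estimate
  have hstep : ∀ x : E₁, ∀ n : ℕ, dist (g x n) (g x (n+1)) ≤ (ε * ‖x‖ ^ p) * r ^ n := by
    intro x n
    have h1 : ‖f ((2:ℝ)^(n+1) • x) - f ((2:ℝ)^n • x) - f ((2:ℝ)^n • x)‖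
        ≤ 2 * ε * (r ^ n * 2 ^ n * ‖x‖ ^ p) := by
      have := hf ((2:ℝ)^n • x) ((2:ℝ)^n • x)
      have hsum : (2:ℝ)^n • x + (2:ℝ)^n • x = (2:ℝ)^(n+1) • x := by
        rw [← add_smul]; congr 1; ring
      rw [hsum] at this
      refine this.trans_eq ?_
      rw [norm_smul, Real.norm_eq_abs, abs_of_pos (h2n n),
        Real.mul_rpow (le_of_lt (h2n n)) (norm_nonneg x), hpow n]
      ring
    have hrepr : g x n - g x (n+1) =
        ((2:ℝ)^(n+1))⁻¹ • (f ((2:ℝ)^n • x) + f ((2:ℝ)^n • x) - f ((2:ℝ)^(n+1) • x)) := by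
      rw [hg_def]
      simp only [smul_sub, smul_add]
      have : ((2:ℝ)^(n+1))⁻¹ • f ((2:ℝ)^n • x) + ((2:ℝ)^(n+1))⁻¹ • f ((2:ℝ)^n • x)
          = ((2:ℝ)^n)⁻¹ • f ((2:ℝ)^n • x) := by
        rw [← add_smul]
        congr 1
        rw [pow_succ]
        field_simp
        ring
      rw [this]
      try abel
    rw [dist_eq_norm, hrepr, norm_smul, Real.norm_eq_abs, abs_of_pos (by positivity :
      (0:ℝ) < ((2:ℝ)^(n+1))⁻¹)]
    have h1' : ‖f ((2:ℝ)^n • x) + f ((2:ℝ)^n • x) - f ((2:ℝ)^(n+1) • x)‖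
        ≤ 2 * ε * (r ^ n * 2 ^ n * ‖x‖ ^ p) := by
      rw [← norm_neg]
      convert h1 using 2
      · rfl
      abel
    calc ((2:ℝ)^(n+1))⁻¹ * ‖f ((2:ℝ)^n • x) + f ((2:ℝ)^n • x) - f ((2:ℝ)^(n+1) • x)‖
        ≤ ((2:ℝ)^(n+1))⁻¹ * (2 * ε * (r ^ n * 2 ^ n * ‖x‖ ^ p)) := by
          exact mul_le_mul_of_nonneg_left h1' (by positivity)
      _ = (ε * ‖x‖ ^ p) * r ^ n := by
          rw [pow_succ]
          field_simp
  -- Cauchy and limit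
  have hcauchy : ∀ x : E₁, ∃ a : E₂, Tendsto (g x) atTop (nhds a) := fun x =>
    cauchySeq_tendsto_of_complete (cauchySeq_of_le_geometric r (ε * ‖x‖ ^ p) hr1 (hstep x))
  choose T hT using hcauchy
  -- denominators
  have h2p : (2:ℝ) ^ p < 2 := by
    nth_rewrite 2 [show (2:ℝ) = (2:ℝ) ^ (1:ℝ) by norm_num]
    exact Real.rpow_lt_rpow_left_iff (by norm_num) |>.2 hp1
  have hden : 1 - r = (2 - 2 ^ p) / 2 := by
    rw [hr_def, Real.rpow_sub (by norm_num), Real.rpow_one]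
    ring
  -- the bound
  have hbound : ∀ x : E₁, ‖f x - T x‖ ≤ (2 * ε / (2 - 2 ^ p)) * ‖x‖ ^ p := by
    intro x
    have h0 : g x 0 = f x := by simp [hg_def]
    have := dist_le_of_le_geometric_of_tendsto₀ r (ε * ‖x‖ ^ p) hr1 (hstep x) (hT x)
    rw [h0, dist_eq_norm] at this
    refine this.trans_eq ?_
    rw [hden]
    rw [div_div_eq_mul_div]
    ring
  -- additivity
  have hadd : ∀ x y : E₁, T (x + y) = T x + T y := by
    intro x y
    have hlim : Tendsto (fun n => g (x+y) n - g x n - g y n) atTop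
        (nhds (T (x+y) - T x - T y)) := ((hT (x+y)).sub (hT x)).sub (hT y)
    have hzero : Tendsto (fun n => g (x+y) n - g x n - g y n) atTop (nhds 0) := by
      apply squeeze_zero_norm (a := fun n => (ε * (‖x‖^p + ‖y‖^p)) * r ^ n)
      · intro n
        have : g (x+y) n - g x n - g y n =
            ((2:ℝ)^n)⁻¹ • (f ((2:ℝ)^n • (x+y)) - f ((2:ℝ)^n • x) - f ((2:ℝ)^n • y)) := by
          simp [hg_def, smul_sub]
        rw [this, norm_smul, Real.norm_eq_abs, abs_of_pos (by positivity :
          (0:ℝ) < ((2:ℝ)^n)⁻¹)]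
        have h2 := hf ((2:ℝ)^n • x) ((2:ℝ)^n • y)
        rw [← smul_add] at h2
        have h3 : ‖(2:ℝ)^n • x‖ ^ p = r ^ n * 2 ^ n * ‖x‖ ^ p := by
          rw [norm_smul, Real.norm_eq_abs, abs_of_pos (h2n n),
            Real.mul_rpow (le_of_lt (h2n n)) (norm_nonneg x), hpow n]
        have h4 : ‖(2:ℝ)^n • y‖ ^ p = r ^ n * 2 ^ n * ‖y‖ ^ p := by
          rw [norm_smul, Real.norm_eq_abs, abs_of_pos (h2n n),
            Real.mul_rpow (le_of_lt (h2n n)) (norm_nonneg y), hpow n]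
        rw [h3, h4] at h2
        calc ((2:ℝ)^n)⁻¹ * ‖f ((2:ℝ)^n • (x+y)) - f ((2:ℝ)^n • x) - f ((2:ℝ)^n • y)‖
            ≤ ((2:ℝ)^n)⁻¹ * (ε * (r ^ n * 2 ^ n * ‖x‖ ^ p + r ^ n * 2 ^ n * ‖y‖ ^ p)) :=
              mul_le_mul_of_nonneg_left h2 (by positivity)
          _ = (ε * (‖x‖^p + ‖y‖^p)) * r ^ n := by field_simp
      · have : Tendsto (fun n : ℕ => r ^ n) atTop (nhds 0) :=
          tendsto_pow_atTop_nhds_zero_of_lt_one hr0 hr1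
        simpa using this.const_mul (ε * (‖x‖^p + ‖y‖^p))
    have h := tendsto_nhds_unique hlim hzero
    have : T (x+y) - (T x + T y) = 0 := by rw [← h]; abel
    exact sub_eq_zero.mp this
  exact ⟨T, ⟨hadd, hbound, hT⟩, fun T' ⟨_, _, hT'⟩ =>
    funext fun x => tendsto_nhds_unique (hT' x) (hT x)⟩
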